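/- Let f ∈ C_+^q(K,ℂ) with ‖f‖_{ℓ²(K_q)} = 1 and set η = (1/√2)(I − i S^down) d_{Y_q}* f ∈ ℓ²(E(Y_q)). Then η is a unit vector with U_q^down η = iη, and for every n ≥ 0 and τ ∈ K_q: P_n^down(q, η; [τ]) = (1/2)|f(τ)|² + (1/2)|f(τ̄)|² + Σ_{(τ,τ')∈E(Y_q)} (1/(2 deg_Y(τ')))·|f(τ')|². In particular, P_n^down(q, η; [τ]) is independent of n, and when f(τ) = (2|S_q|)^{−1/2} for all τ ∈ K_q it equals 1/(2|S_q|) + Σ_{(τ,τ')∈E(Y_q)} (1/(2 deg_Y(τ')))·(1/(2|S_q|)). -/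

import Mathlib

open scoped BigOperators

/-- The set of oriented `q`-simplices of a simplicial complex, together with the
orientation-reversal involution `bar` (writing `τ̄` for `bar τ`). -/
structure OrientedSet where
  K : Type
  bar : K → K
  bar_invol : ∀ τ, bar (bar τ) = τ
  bar_ne : ∀ τ, bar τ ≠ τ

/-- The data of an up graph (`mult = 2(q+1)`) or a down graph (`mult = 2`) on the set of
oriented `q`-simplices: the sign function `η` (extended by `0` off the edge set, so that
`(τ₁, τ₂)` is an edge iff `eta τ₁ τ₂ ≠ 0`), the degree function (`deg_X`, resp. `deg_Y`),
and local finiteness; the degree of a vertex `τ` in the graph is `mult * deg τ`. -/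
structure GroverStructure (O : OrientedSet) where
  eta : O.K → O.K → ℝ
  eta_symm : ∀ τ₁ τ₂, eta τ₁ τ₂ = eta τ₂ τ₁
  eta_vals : ∀ τ₁ τ₂, eta τ₁ τ₂ = 0 ∨ eta τ₁ τ₂ = 1 ∨ eta τ₁ τ₂ = -1
  eta_bar_left : ∀ τ₁ τ₂, eta (O.bar τ₁) τ₂ = - eta τ₁ τ₂
  eta_self : ∀ τ, eta τ τ = 0
  eta_bar_self : ∀ τ, eta τ (O.bar τ) = 0
  deg : O.K → ℕ
  deg_pos : ∀ τ, 0 < deg τ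
  deg_bar : ∀ τ, deg (O.bar τ) = deg τ
  mult : ℕ
  nbhdFinite : ∀ τ, {τ' | eta τ τ' ≠ 0}.Finite
  nbhd_card : ∀ τ, (nbhdFinite τ).toFinset.card = mult * deg τ

namespace GroverStructure

variable {O : OrientedSet} (Y : GroverStructure O)

/-- `(τ₁, τ₂)` is an oriented edge of the up/down graph. -/
def Edge (τ₁ τ₂ : O.K) : Prop := Y.eta τ₁ τ₂ ≠ 0

/-- The normalization constant `(mult * deg τ)^(-1/2)`. -/
noncomputable def c (τ : O.K) : ℂ := ((Real.sqrt (Y.mult * Y.deg τ) : ℝ) : ℂ)⁻¹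

/-- The operator `d : ℓ²(E) → ℓ²(K)`; elements of `ℓ²(E)` are represented as
functions on `K × K` (supported on the set of edges). -/
noncomputable def d (g : O.K × O.K → ℂ) : O.K → ℂ :=
  fun τ => Y.c τ * ∑ᶠ τ' ∈ {τ' | Y.eta τ τ' ≠ 0}, g (τ, τ')

/-- The adjoint `d* : ℓ²(K) → ℓ²(E)`. -/
noncomputable def dstar (f : O.K → ℂ) : O.K × O.K → ℂ :=
  fun p => if Y.eta p.1 p.2 ≠ 0 then Y.c p.1 * f p.1 else 0

/-- The shift operator `(S g)(τ₁,τ₂) = η(τ₁,τ₂) • g(τ₂,τ₁)`. -/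
noncomputable def shift (g : O.K × O.K → ℂ) : O.K × O.K → ℂ :=
  fun p => (Y.eta p.1 p.2 : ℂ) * g (p.2, p.1)

/-- The discriminant operator `D = d ∘ S ∘ d*`. -/
noncomputable def disc (f : O.K → ℂ) : O.K → ℂ := Y.d (Y.shift (Y.dstar f))

/-- The Grover walk `U = S (2 d* d − I)`. -/
noncomputable def walk (g : O.K × O.K → ℂ) : O.K × O.K → ℂ :=
  Y.shift (fun p => 2 * Y.dstar (Y.d g) p - g p)

/-- Membership in `ℓ²(E)`: square summable and supported on the edge set. -/
def MemEdge (g : O.K × O.K → ℂ) : Prop :=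
  Memℓp g 2 ∧ ∀ p : O.K × O.K, ¬ Y.Edge p.1 p.2 → g p = 0

end GroverStructure

/-- The orthogonal projection of `ℓ²(K_q)` onto the cochain space
`C^q(K,ℂ) = {f : f(τ̄) = -f(τ)}`. -/
noncomputable def projC (O : OrientedSet) (f : O.K → ℂ) : O.K → ℂ :=
  fun τ => (f τ - f (O.bar τ)) / 2

/-- The finding probability at time `n` at the simplex `[τ] ∈ S_q` with initial state
`φ ∈ ℓ²(E)`: the sum of `|((U)^n φ)(τ₁,τ₂)|²` over the edges `(τ₁,τ₂)` with
`[τ₁] = [τ]` (that is, `τ₁ = τ` or `τ₁ = τ̄`). -/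
noncomputable def GroverStructure.findProb {O : OrientedSet} (Y : GroverStructure O)
    (n : ℕ) (φ : O.K × O.K → ℂ) (τ : O.K) : ℝ :=
  ∑ᶠ p ∈ {p : O.K × O.K | Y.eta p.1 p.2 ≠ 0 ∧ (p.1 = τ ∨ p.1 = O.bar τ)},
    ‖(Y.walk)^[n] φ p‖ ^ 2

/-- The state `η = (1/√2)(I − i S^down) d_{Y_q}* f`. -/
noncomputable def GroverStructure.statVec {O : OrientedSet} (Y : GroverStructure O)
    (f : O.K → ℂ) : O.K × O.K → ℂ :=
  fun p => ((Real.sqrt 2 : ℝ) : ℂ)⁻¹ * (Y.dstar f p - Complex.I * Y.shift (Y.dstar f) p)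

section Aux
open Complex

variable {O : OrientedSet} (Y : GroverStructure O)

lemma aux_eta_bar_right (τ₁ τ₂ : O.K) : Y.eta τ₁ (O.bar τ₂) = - Y.eta τ₁ τ₂ := by
  rw [Y.eta_symm, Y.eta_bar_left, Y.eta_symm]

lemma aux_c_bar (τ : O.K) : Y.c (O.bar τ) = Y.c τ := by
  unfold GroverStructure.c; rw [Y.deg_bar]

lemma aux_eta_mul_self {τ₁ τ₂ : O.K} (h : Y.eta τ₁ τ₂ ≠ 0) :
    Y.eta τ₁ τ₂ * Y.eta τ₁ τ₂ = 1 := by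
  rcases Y.eta_vals τ₁ τ₂ with h1 | h1 | h1 <;> rw [h1] <;> norm_num
  exact h h1

lemma aux_statVec_off {f : O.K → ℂ} {p : O.K × O.K} (h : Y.eta p.1 p.2 = 0) :
    Y.statVec f p = 0 := by
  simp [GroverStructure.statVec, GroverStructure.dstar, GroverStructure.shift, h]

lemma aux_statVec_edge (f : O.K → ℂ) {τ₁ τ₂ : O.K} (h : Y.eta τ₁ τ₂ ≠ 0) :
    Y.statVec f (τ₁, τ₂)
      = ((Real.sqrt 2 : ℝ) : ℂ)⁻¹ *
          (Y.c τ₁ * f τ₁ - Complex.I * ((Y.eta τ₁ τ₂ : ℝ) : ℂ) * (Y.c τ₂ * f τ₂)) := by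
  have h' : Y.eta τ₂ τ₁ ≠ 0 := by rw [Y.eta_symm]; exact h
  simp only [GroverStructure.statVec, GroverStructure.dstar, GroverStructure.shift,
    if_pos h, if_pos h']
  ring

lemma aux_c_mul_self (τ : O.K) :
    Y.c τ * Y.c τ = (((Y.mult * Y.deg τ : ℕ) : ℝ)⁻¹ : ℂ) := by
  unfold GroverStructure.c
  rw [← mul_inv, ← Complex.ofReal_mul, Real.mul_self_sqrt (by positivity)]
  push_cast
  ring

end Aux
section Aux2
open Complex

variable {O : OrientedSet} (Y : GroverStructure O)

lemma aux_mem_nbhd {τ τ' : O.K} :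
    τ' ∈ (Y.nbhdFinite τ).toFinset ↔ Y.eta τ τ' ≠ 0 := by
  simp [Set.Finite.mem_toFinset]

lemma aux_sum_eta_cf (f : O.K → ℂ) (hsym : ∀ τ, f (O.bar τ) = f τ) (τ : O.K) :
    ∑ τ' ∈ (Y.nbhdFinite τ).toFinset,
      ((Y.eta τ τ' : ℝ) : ℂ) * (Y.c τ' * f τ') = 0 := by
  refine Finset.sum_involution (fun a _ => O.bar a) ?_ ?_ ?_ ?_
  · intro a _
    rw [aux_eta_bar_right, aux_c_bar, hsym]
    push_cast
    ring
  · intro a _ _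
    exact O.bar_ne a
  · intro a ha
    rw [aux_mem_nbhd] at ha ⊢
    rw [aux_eta_bar_right]
    simpa using ha
  · intro a _
    exact O.bar_invol a

lemma aux_d_apply (g : O.K × O.K → ℂ) (τ : O.K) :
    Y.d g τ = Y.c τ * ∑ τ' ∈ (Y.nbhdFinite τ).toFinset, g (τ, τ') := by
  unfold GroverStructure.d
  rw [finsum_mem_eq_finite_toFinset_sum _ (Y.nbhdFinite τ)]

lemma aux_d_statVec (f : O.K → ℂ) (hm : Y.mult ≠ 0)
    (hsym : ∀ τ, f (O.bar τ) = f τ) (τ : O.K) :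
    Y.d (Y.statVec f) τ = ((Real.sqrt 2 : ℝ) : ℂ)⁻¹ * f τ := by
  rw [aux_d_apply]
  have hcongr : ∑ τ' ∈ (Y.nbhdFinite τ).toFinset, Y.statVec f (τ, τ')
      = ∑ τ' ∈ (Y.nbhdFinite τ).toFinset,
          ((Real.sqrt 2 : ℝ) : ℂ)⁻¹ *
            (Y.c τ * f τ - Complex.I * ((Y.eta τ τ' : ℝ) : ℂ) * (Y.c τ' * f τ')) := by
    refine Finset.sum_congr rfl fun τ' hτ' => ?_
    exact aux_statVec_edge Y f ((aux_mem_nbhd Y).mp hτ')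
  rw [hcongr, ← Finset.mul_sum, Finset.sum_sub_distrib, Finset.sum_const, Y.nbhd_card]
  have h0 : ∑ τ' ∈ (Y.nbhdFinite τ).toFinset,
      Complex.I * ((Y.eta τ τ' : ℝ) : ℂ) * (Y.c τ' * f τ') = 0 := by
    have := aux_sum_eta_cf Y f hsym τ
    calc ∑ τ' ∈ (Y.nbhdFinite τ).toFinset,
        Complex.I * ((Y.eta τ τ' : ℝ) : ℂ) * (Y.c τ' * f τ')
        = Complex.I * ∑ τ' ∈ (Y.nbhdFinite τ).toFinset,
            ((Y.eta τ τ' : ℝ) : ℂ) * (Y.c τ' * f τ') := by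
          rw [Finset.mul_sum]; exact Finset.sum_congr rfl fun _ _ => by ring
      _ = 0 := by rw [this, mul_zero]
  rw [h0, sub_zero]
  have hc : ((Y.mult * Y.deg τ : ℕ) : ℂ) * (Y.c τ * Y.c τ) = 1 := by
    rw [aux_c_mul_self]
    have hx : ((Y.mult * Y.deg τ : ℕ) : ℝ) ≠ 0 := by
      have := Y.deg_pos τ
      positivity
    rw [← Complex.ofReal_natCast, ← Complex.ofReal_inv, ← Complex.ofReal_mul,
      mul_inv_cancel₀ hx, Complex.ofReal_one]
  rw [nsmul_eq_mul]
  push_cast at hc ⊢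
  linear_combination (((Real.sqrt 2 : ℝ) : ℂ)⁻¹ * f τ) * hc

end Aux2
section Aux3
open Complex

variable {O : OrientedSet} (Y : GroverStructure O)

lemma aux_walk_statVec (f : O.K → ℂ) (hm : Y.mult ≠ 0)
    (hsym : ∀ τ, f (O.bar τ) = f τ) :
    Y.walk (Y.statVec f) = fun p => Complex.I * Y.statVec f p := by
  funext p
  obtain ⟨τ₁, τ₂⟩ := p
  unfold GroverStructure.walk GroverStructure.shift
  simp only
  by_cases h : Y.eta τ₁ τ₂ = 0
  · have h0 : Y.statVec f (τ₁, τ₂) = 0 := aux_statVec_off Y (p := (τ₁, τ₂)) h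
    rw [h, h0]
    push_cast
    ring
  · have h' : Y.eta τ₂ τ₁ ≠ 0 := by rw [Y.eta_symm]; exact h
    have hdd : Y.dstar (Y.d (Y.statVec f)) (τ₂, τ₁)
        = Y.c τ₂ * (((Real.sqrt 2 : ℝ) : ℂ)⁻¹ * f τ₂) := by
      unfold GroverStructure.dstar
      rw [if_pos h', aux_d_statVec Y f hm hsym]
    rw [hdd, aux_statVec_edge Y f (τ₁ := τ₂) (τ₂ := τ₁) h',
      aux_statVec_edge Y f (τ₁ := τ₁) (τ₂ := τ₂) h, Y.eta_symm τ₂ τ₁]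
    have he : ((Y.eta τ₁ τ₂ : ℝ) : ℂ) * ((Y.eta τ₁ τ₂ : ℝ) : ℂ) = 1 := by
      rw [← Complex.ofReal_mul, aux_eta_mul_self Y h, Complex.ofReal_one]
    linear_combination (((Real.sqrt 2 : ℝ) : ℂ)⁻¹ * Complex.I * (Y.c τ₁ * f τ₁)) * he
      + (((Y.eta τ₁ τ₂ : ℝ) : ℂ) * Y.c τ₂ * ((Real.sqrt 2 : ℝ) : ℂ)⁻¹ * f τ₂) * Complex.I_sq

lemma aux_d_const_mul (a : ℂ) (g : O.K × O.K → ℂ) (τ : O.K) :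
    Y.d (fun p => a * g p) τ = a * Y.d g τ := by
  rw [aux_d_apply, aux_d_apply, Finset.mul_sum]
  rw [← Finset.mul_sum, ← Finset.mul_sum]
  ring

lemma aux_walk_const_mul (a : ℂ) (g : O.K × O.K → ℂ) :
    Y.walk (fun p => a * g p) = fun p => a * Y.walk g p := by
  funext p
  unfold GroverStructure.walk GroverStructure.shift GroverStructure.dstar
  simp only [aux_d_const_mul]
  split <;> ring

lemma aux_walk_iter (f : O.K → ℂ) (hm : Y.mult ≠ 0)
    (hsym : ∀ τ, f (O.bar τ) = f τ) (n : ℕ) :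
    (Y.walk)^[n] (Y.statVec f) = fun p => Complex.I ^ n * Y.statVec f p := by
  induction n with
  | zero => simp
  | succ n ih =>
      rw [Function.iterate_succ_apply', ih, aux_walk_const_mul,
        aux_walk_statVec Y f hm hsym]
      funext p
      simp only
      rw [pow_succ]
      ring

end Aux3
section Aux4
open Complex

variable {O : OrientedSet} (Y : GroverStructure O)

lemma aux_norm_sq_inv_sqrt2 (z : ℂ) :
    ‖((Real.sqrt 2 : ℝ) : ℂ)⁻¹ * z‖ ^ 2 = ‖z‖ ^ 2 / 2 := by
  rw [norm_mul, mul_pow, norm_inv, Complex.norm_real, Real.norm_eq_abs,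
    _root_.abs_of_nonneg (Real.sqrt_nonneg 2), inv_pow, Real.sq_sqrt (by norm_num : (0:ℝ) ≤ 2)]
  ring

lemma aux_norm_AB (A B : ℂ) :
    ‖A - Complex.I * B‖ ^ 2 + ‖A + Complex.I * B‖ ^ 2 = 2 * ‖A‖ ^ 2 + 2 * ‖B‖ ^ 2 := by
  have h : ∀ z : ℂ, ‖z‖ ^ 2 = Complex.normSq z := fun z => by rw [← Complex.sq_norm]
  simp only [h, Complex.normSq_apply, Complex.sub_re, Complex.sub_im, Complex.add_re,
    Complex.add_im, Complex.mul_re, Complex.mul_im, Complex.I_re, Complex.I_im]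
  ring

lemma aux_norm_eta_mul {τ₁ τ₂ : O.K} (h : Y.eta τ₁ τ₂ ≠ 0) (z : ℂ) :
    ‖((Y.eta τ₁ τ₂ : ℝ) : ℂ) * z‖ = ‖z‖ := by
  rw [norm_mul, Complex.norm_real, Real.norm_eq_abs]
  rcases Y.eta_vals τ₁ τ₂ with h1 | h1 | h1
  · exact absurd h1 h
  · rw [h1]; norm_num
  · rw [h1]; norm_num

lemma aux_pairing (f : O.K → ℂ) (hsym : ∀ τ, f (O.bar τ) = f τ)
    {τ₁ τ₂ : O.K} (h : Y.eta τ₁ τ₂ ≠ 0) :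
    ‖Y.statVec f (τ₁, τ₂)‖ ^ 2 + ‖Y.statVec f (O.bar τ₁, τ₂)‖ ^ 2
      = ‖Y.c τ₁ * f τ₁‖ ^ 2 + ‖Y.c τ₂ * f τ₂‖ ^ 2 := by
  have h2 : Y.eta (O.bar τ₁) τ₂ ≠ 0 := by
    rw [Y.eta_bar_left]; simpa using h
  rw [aux_statVec_edge Y f h, aux_statVec_edge Y f h2, Y.eta_bar_left, aux_c_bar, hsym]
  set A := Y.c τ₁ * f τ₁
  set B := ((Y.eta τ₁ τ₂ : ℝ) : ℂ) * (Y.c τ₂ * f τ₂) with hB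
  have e1 : Complex.I * ((Y.eta τ₁ τ₂ : ℝ) : ℂ) * (Y.c τ₂ * f τ₂) = Complex.I * B := by
    rw [hB]; ring
  have e2 : Complex.I * ((-(Y.eta τ₁ τ₂ : ℝ) : ℝ) : ℂ) * (Y.c τ₂ * f τ₂) = -(Complex.I * B) := by
    rw [hB]; push_cast; ring
  rw [e1, e2, sub_neg_eq_add, aux_norm_sq_inv_sqrt2, aux_norm_sq_inv_sqrt2,
    ← add_div, aux_norm_AB]
  have e3 : ‖B‖ = ‖Y.c τ₂ * f τ₂‖ := aux_norm_eta_mul Y h _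
  rw [e3]
  ring

lemma aux_norm_c_mul_sq (τ : O.K) (z : ℂ) :
    ‖Y.c τ * z‖ ^ 2 = (((Y.mult * Y.deg τ : ℕ) : ℝ))⁻¹ * ‖z‖ ^ 2 := by
  rw [norm_mul, mul_pow]
  congr 1
  unfold GroverStructure.c
  rw [norm_inv, Complex.norm_real, Real.norm_eq_abs, _root_.abs_of_nonneg (Real.sqrt_nonneg _),
    inv_pow, Real.sq_sqrt (by positivity)]
  push_cast
  ring_nf

end Aux4
section Aux5
open Complex

variable {O : OrientedSet} (Y : GroverStructure O)

lemma aux_findProb (f : O.K → ℂ) (hYm : Y.mult = 2)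
    (hsym : ∀ τ, f (O.bar τ) = f τ) (n : ℕ) (τ : O.K) :
    Y.findProb n (Y.statVec f) τ
      = (1 / 2) * ‖f τ‖ ^ 2 + (1 / 2) * ‖f (O.bar τ)‖ ^ 2
        + ∑ᶠ τ' ∈ {τ' | Y.eta τ τ' ≠ 0}, (1 / (2 * (Y.deg τ' : ℝ))) * ‖f τ'‖ ^ 2 := by
  classical
  have hm : Y.mult ≠ 0 := by rw [hYm]; norm_num
  unfold GroverStructure.findProb
  have hb : ∀ p : O.K × O.K,
      ‖(Y.walk)^[n] (Y.statVec f) p‖ ^ 2 = ‖Y.statVec f p‖ ^ 2 := by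
    intro p
    rw [aux_walk_iter Y f hm hsym n]
    simp only [norm_mul, norm_pow, Complex.norm_I, one_pow, one_mul]
  simp only [hb]
  have hset : {p : O.K × O.K | Y.eta p.1 p.2 ≠ 0 ∧ (p.1 = τ ∨ p.1 = O.bar τ)}
      = ↑((Y.nbhdFinite τ).toFinset.image (fun τ' => (τ, τ'))
          ∪ (Y.nbhdFinite τ).toFinset.image (fun τ' => (O.bar τ, τ'))) := by
    ext ⟨p₁, p₂⟩
    simp only [Set.mem_setOf_eq, Finset.coe_union, Set.mem_union, Finset.coe_image,
      Set.mem_image, Finset.mem_coe, aux_mem_nbhd]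
    constructor
    · rintro ⟨hne, h1 | h1⟩
      · exact Or.inl ⟨p₂, by rw [← h1]; exact hne, by rw [h1]⟩
      · refine Or.inr ⟨p₂, ?_, by rw [h1]⟩
        have h2 : Y.eta (O.bar τ) p₂ ≠ 0 := by rw [← h1]; exact hne
        rw [Y.eta_bar_left] at h2
        simpa using h2
    · rintro (⟨x, hx, hxe⟩ | ⟨x, hx, hxe⟩)
      · injection hxe with h1 h2
        subst h1; subst h2
        exact ⟨hx, Or.inl rfl⟩
      · injection hxe with h1 h2
        subst h1; subst h2
        refine ⟨?_, Or.inr rfl⟩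
        rw [Y.eta_bar_left]
        simpa using hx
  rw [hset, finsum_mem_coe_finset]
  set T := (Y.nbhdFinite τ).toFinset with hT
  have hdisj : Disjoint (T.image (fun τ' => (τ, τ'))) (T.image (fun τ' => (O.bar τ, τ'))) := by
    rw [Finset.disjoint_left]
    rintro ⟨p₁, p₂⟩ hp1 hp2
    simp only [Finset.mem_image, Prod.mk.injEq] at hp1 hp2
    obtain ⟨x, _, hx1, _⟩ := hp1
    obtain ⟨y, _, hy1, _⟩ := hp2
    exact O.bar_ne τ (by rw [hy1, ← hx1])
  have hinj1 : ∀ x ∈ T, ∀ y ∈ T, (τ, x) = (τ, y) → x = y := by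
    intro x _ y _ hxy; exact (Prod.mk.injEq .. ▸ hxy).2
  have hinj2 : ∀ x ∈ T, ∀ y ∈ T, (O.bar τ, x) = (O.bar τ, y) → x = y := by
    intro x _ y _ hxy; exact (Prod.mk.injEq .. ▸ hxy).2
  rw [Finset.sum_union hdisj, Finset.sum_image hinj1, Finset.sum_image hinj2,
    ← Finset.sum_add_distrib]
  have hpair : ∀ τ' ∈ T,
      ‖Y.statVec f (τ, τ')‖ ^ 2 + ‖Y.statVec f (O.bar τ, τ')‖ ^ 2
        = ‖Y.c τ * f τ‖ ^ 2 + ‖Y.c τ' * f τ'‖ ^ 2 := by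
    intro τ' hτ'
    exact aux_pairing Y f hsym ((aux_mem_nbhd Y).mp hτ')
  rw [Finset.sum_congr rfl hpair, Finset.sum_add_distrib, Finset.sum_const,
    hT, Y.nbhd_card, nsmul_eq_mul]
  have h1 : ((Y.mult * Y.deg τ : ℕ) : ℝ) * ‖Y.c τ * f τ‖ ^ 2 = ‖f τ‖ ^ 2 := by
    rw [aux_norm_c_mul_sq, ← mul_assoc, mul_inv_cancel₀, one_mul]
    have := Y.deg_pos τ
    positivity
  have h2 : ∀ τ' : O.K, ‖Y.c τ' * f τ'‖ ^ 2 = (1 / (2 * (Y.deg τ' : ℝ))) * ‖f τ'‖ ^ 2 := by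
    intro τ'
    rw [aux_norm_c_mul_sq, hYm]
    push_cast
    ring_nf
  rw [h1, finsum_mem_eq_finite_toFinset_sum _ (Y.nbhdFinite τ), ← hT]
  have h3 : ∑ τ' ∈ T, ‖Y.c τ' * f τ'‖ ^ 2
      = ∑ τ' ∈ T, (1 / (2 * (Y.deg τ' : ℝ))) * ‖f τ'‖ ^ 2 :=
    Finset.sum_congr rfl fun τ' _ => h2 τ'
  rw [h3, hsym τ]
  ring

end Aux5
section Aux6
open Complex

variable {O : OrientedSet} (Y : GroverStructure O)

lemma aux_ofReal_norm_sq (z : ℂ) :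
    ENNReal.ofReal (‖z‖ ^ 2) = ((‖z‖₊ ^ 2 : NNReal) : ENNReal) := by
  rw [ENNReal.ofReal_pow (norm_nonneg _), ofReal_norm, ENNReal.coe_pow, enorm_eq_nnnorm]

lemma aux_tsum_ite_left (f : O.K → ℂ) :
    (∑' p : O.K × O.K, if Y.eta p.1 p.2 ≠ 0
        then ENNReal.ofReal (‖Y.c p.1 * f p.1‖ ^ 2) else 0)
      = ∑' τ : O.K, ((Y.mult * Y.deg τ : ℕ) : ENNReal)
          * ENNReal.ofReal (‖Y.c τ * f τ‖ ^ 2) := by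
  refine (ENNReal.tsum_prod (f := fun τ₁ τ₂ : O.K => if Y.eta τ₁ τ₂ ≠ 0
      then ENNReal.ofReal (‖Y.c τ₁ * f τ₁‖ ^ 2) else 0)).trans
    (tsum_congr fun τ₁ => ?_)
  rw [tsum_eq_sum (s := (Y.nbhdFinite τ₁).toFinset)
    (fun b hb => if_neg (by simpa [aux_mem_nbhd] using hb))]
  rw [Finset.sum_congr rfl (fun τ₂ hτ₂ => if_pos ((aux_mem_nbhd Y).mp hτ₂)),
    Finset.sum_const, Y.nbhd_card, nsmul_eq_mul]

lemma aux_tsum_ite_value (f : O.K → ℂ) (hm : Y.mult ≠ 0) (hf2 : Memℓp f 2)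
    (hnorm : ∑' τ, ‖f τ‖ ^ 2 = (1 : ℝ)) :
    (∑' p : O.K × O.K, if Y.eta p.1 p.2 ≠ 0
        then ENNReal.ofReal (‖Y.c p.1 * f p.1‖ ^ 2) else 0) = 1 := by
  rw [aux_tsum_ite_left]
  have hsq : Summable (fun τ => ‖f τ‖ ^ 2) := by
    have h := hf2.summable (p := 2) (by norm_num)
    have he : (fun τ => ‖f τ‖ ^ ((2 : ENNReal)).toReal) = fun τ => ‖f τ‖ ^ 2 := by
      funext τ
      rw [show ((2 : ENNReal)).toReal = ((2 : ℕ) : ℝ) by norm_num, Real.rpow_natCast]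
    rwa [he] at h
  have hpt : ∀ τ : O.K, ((Y.mult * Y.deg τ : ℕ) : ENNReal)
      * ENNReal.ofReal (‖Y.c τ * f τ‖ ^ 2) = ENNReal.ofReal (‖f τ‖ ^ 2) := by
    intro τ
    have hd := Y.deg_pos τ
    have hn : ((Y.mult * Y.deg τ : ℕ) : ℝ) ≠ 0 := by
      have h0 : Y.mult * Y.deg τ ≠ 0 := by positivity
      exact_mod_cast Nat.cast_ne_zero.mpr h0
    rw [aux_norm_c_mul_sq, ← ENNReal.ofReal_natCast, ← ENNReal.ofReal_mul (by positivity),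
      ← mul_assoc, mul_inv_cancel₀ hn, one_mul]
  rw [tsum_congr hpt, ← ENNReal.ofReal_tsum_of_nonneg (fun τ => by positivity) hsq,
    hnorm, ENNReal.ofReal_one]

lemma aux_tsum_statVec (f : O.K → ℂ) (hm : Y.mult ≠ 0) (hf2 : Memℓp f 2)
    (hsym : ∀ τ, f (O.bar τ) = f τ)
    (hnorm : ∑' τ, ‖f τ‖ ^ 2 = (1 : ℝ)) :
    ∑' p : O.K × O.K, ‖Y.statVec f p‖ ^ 2 = (1 : ℝ) := by
  classical
  set G : O.K × O.K → ENNReal := fun p => ENNReal.ofReal (‖Y.statVec f p‖ ^ 2) with hG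
  set a : O.K → ENNReal := fun σ => ENNReal.ofReal (‖Y.c σ * f σ‖ ^ 2) with ha
  have hinv : Function.Involutive (fun p : O.K × O.K => (O.bar p.1, p.2)) := by
    intro p; simp [O.bar_invol]
  have hH : ∀ p : O.K × O.K,
      G p + G (O.bar p.1, p.2) = if Y.eta p.1 p.2 ≠ 0 then a p.1 + a p.2 else 0 := by
    intro p
    by_cases h : Y.eta p.1 p.2 = 0
    · have h0 : Y.statVec f p = 0 := aux_statVec_off Y h
      have h1 : Y.statVec f (O.bar p.1, p.2) = 0 := by
        refine aux_statVec_off Y (p := (O.bar p.1, p.2)) ?_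
        show Y.eta (O.bar p.1) p.2 = 0
        rw [Y.eta_bar_left, h, neg_zero]
      rw [hG]
      simp [h0, h1, h]
    · rw [if_pos h, hG, ha]
      simp only
      rw [← ENNReal.ofReal_add (by positivity) (by positivity),
        ← ENNReal.ofReal_add (by positivity) (by positivity)]
      congr 1
      exact aux_pairing Y f hsym h
  have he : ∑' p : O.K × O.K, G p = ∑' p : O.K × O.K, G (O.bar p.1, p.2) :=
    (Equiv.tsum_eq (hinv.toPerm _) G).symm
  have hsum2 : ∑' p : O.K × O.K, G p + ∑' p : O.K × O.K, G p
      = ∑' p : O.K × O.K, (if Y.eta p.1 p.2 ≠ 0 then a p.1 + a p.2 else 0) := by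
    nth_rewrite 2 [he]
    rw [← ENNReal.tsum_add]
    exact tsum_congr hH
  have hsplit : ∀ p : O.K × O.K,
      (if Y.eta p.1 p.2 ≠ 0 then a p.1 + a p.2 else 0)
        = (if Y.eta p.1 p.2 ≠ 0 then a p.1 else 0)
          + (if Y.eta p.1 p.2 ≠ 0 then a p.2 else 0) := by
    intro p; split <;> simp
  have hswap : (∑' p : O.K × O.K, if Y.eta p.1 p.2 ≠ 0 then a p.2 else 0)
      = (∑' p : O.K × O.K, if Y.eta p.1 p.2 ≠ 0 then a p.1 else 0) := by
    have hpc := Equiv.tsum_eq (Equiv.prodComm O.K O.K)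
      (fun p : O.K × O.K => if Y.eta p.1 p.2 ≠ 0 then a p.2 else 0)
    refine hpc.symm.trans (tsum_congr fun c => ?_)
    simp only [Equiv.prodComm_apply, Prod.fst_swap, Prod.snd_swap]
    simp only [Y.eta_symm c.2 c.1]
  have hsum3 : ∑' p : O.K × O.K, G p + ∑' p : O.K × O.K, G p = 2 := by
    rw [hsum2, tsum_congr hsplit, ENNReal.tsum_add, hswap,
      aux_tsum_ite_value Y f hm hf2 hnorm]
    norm_num
  have hGsum : ∑' p : O.K × O.K, G p = 1 := by
    have h2 : (2 : ENNReal) * ∑' p : O.K × O.K, G p = 2 * 1 := by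
      rw [two_mul, hsum3, mul_one]
    exact (ENNReal.mul_right_inj (by norm_num) (by norm_num)).mp h2
  have hGg : ∀ p : O.K × O.K, G p = ((‖Y.statVec f p‖₊ ^ 2 : NNReal) : ENNReal) :=
    fun p => aux_ofReal_norm_sq _
  have hcoe : ∑' p : O.K × O.K, ((‖Y.statVec f p‖₊ ^ 2 : NNReal) : ENNReal) = 1 := by
    rw [← tsum_congr hGg, hGsum]
  have hsummable : Summable (fun p : O.K × O.K => ‖Y.statVec f p‖₊ ^ 2) :=
    ENNReal.tsum_coe_ne_top_iff_summable.mp (by rw [hcoe]; norm_num)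
  have hnn : (∑' p : O.K × O.K, ‖Y.statVec f p‖₊ ^ 2) = (1 : NNReal) := by
    have h1 : ((∑' p : O.K × O.K, ‖Y.statVec f p‖₊ ^ 2 : NNReal) : ENNReal) = 1 := by
      rw [ENNReal.coe_tsum hsummable, hcoe]
    exact_mod_cast h1
  have hfin : ∑' p : O.K × O.K, ‖Y.statVec f p‖ ^ 2
      = ∑' p : O.K × O.K, ((‖Y.statVec f p‖₊ ^ 2 : NNReal) : ℝ) := by
    refine tsum_congr fun p => ?_
    rw [NNReal.coe_pow, coe_nnnorm]
  rw [hfin, ← NNReal.coe_tsum, hnn, NNReal.coe_one]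

end Aux6
/-- For a unit vector `f ∈ C_+^q(K,ℂ)`, the state
`η = (1/√2)(I − i S^down) d_{Y_q}* f` is a unit vector with `U_q^down η = iη`, and the
finding probability at every time `n` at `[τ]` equals
`(1/2)|f(τ)|² + (1/2)|f(τ̄)|² + ∑_{(τ,τ')∈E(Y_q)} (2 deg_Y(τ'))⁻¹ |f(τ')|²`;
in particular it is independent of `n`, and for the constant function
`f ≡ (2|S_q|)^{-1/2}` it equals
`1/(2|S_q|) + ∑_{(τ,τ')∈E(Y_q)} (2 deg_Y(τ'))⁻¹ (2|S_q|)⁻¹`. -/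
theorem findProb_down_of_symmetric_state
    (O : OrientedSet) (Y : GroverStructure O) (hYm : Y.mult = 2)
    (f : O.K → ℂ) (hf2 : Memℓp f 2)
    (hsym : ∀ τ, f (O.bar τ) = f τ)
    (hnorm : ∑' τ, ‖f τ‖ ^ 2 = (1 : ℝ)) :
    (∑' p, ‖Y.statVec f p‖ ^ 2 = (1 : ℝ)) ∧
    (Y.walk (Y.statVec f) = fun p => Complex.I * Y.statVec f p) ∧
    (∀ (n : ℕ) (τ : O.K),
      Y.findProb n (Y.statVec f) τ
        = (1 / 2) * ‖f τ‖ ^ 2 + (1 / 2) * ‖f (O.bar τ)‖ ^ 2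
          + ∑ᶠ τ' ∈ {τ' | Y.eta τ τ' ≠ 0}, (1 / (2 * (Y.deg τ' : ℝ))) * ‖f τ'‖ ^ 2) ∧
    (∀ (n m : ℕ) (τ : O.K),
      Y.findProb n (Y.statVec f) τ = Y.findProb m (Y.statVec f) τ) ∧
    (∀ Nq : ℕ, Nat.card O.K = 2 * Nq →
      (∀ τ, f τ = ((Real.sqrt (2 * (Nq : ℝ)) : ℝ) : ℂ)⁻¹) →
      ∀ (n : ℕ) (τ : O.K),
        Y.findProb n (Y.statVec f) τ
          = 1 / (2 * (Nq : ℝ))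
            + ∑ᶠ τ' ∈ {τ' | Y.eta τ τ' ≠ 0},
                (1 / (2 * (Y.deg τ' : ℝ))) * (1 / (2 * (Nq : ℝ)))) := by
  have hm : Y.mult ≠ 0 := by rw [hYm]; norm_num
  refine ⟨aux_tsum_statVec Y f hm hf2 hsym hnorm,
    aux_walk_statVec Y f hm hsym,
    fun n τ => aux_findProb Y f hYm hsym n τ,
    fun n m τ => by rw [aux_findProb Y f hYm hsym n τ, aux_findProb Y f hYm hsym m τ],
    ?_⟩
  intro Nq hcard hconst n τ
  rw [aux_findProb Y f hYm hsym n τ]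
  have hval : ∀ σ : O.K, ‖f σ‖ ^ 2 = 1 / (2 * (Nq : ℝ)) := by
    intro σ
    rw [hconst σ, norm_inv, Complex.norm_real, Real.norm_eq_abs,
      _root_.abs_of_nonneg (Real.sqrt_nonneg _), inv_pow,
      Real.sq_sqrt (by positivity), one_div]
  have hfin : (∑ᶠ τ' ∈ {τ' | Y.eta τ τ' ≠ 0}, (1 / (2 * (Y.deg τ' : ℝ))) * ‖f τ'‖ ^ 2)
      = ∑ᶠ τ' ∈ {τ' | Y.eta τ τ' ≠ 0},
          (1 / (2 * (Y.deg τ' : ℝ))) * (1 / (2 * (Nq : ℝ))) :=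
    finsum_mem_congr rfl fun x _ => by rw [hval x]
  rw [hval τ, hval (O.bar τ), hfin]
  ring
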